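/- Let L ≥ 1 be odd. For a positive integer N, the lattice ℤ^L has a geometrically similar sublattice of index N if and only if N = m^L for some positive integer m (and such a sublattice is given by m·ℤ^L). -/

import Mathlib

open Matrix Function

/-- The integer lattice `ℤ^L` inside `EuclideanSpace ℝ (Fin L)`. -/
noncomputable def Zlat (L : ℕ) : AddSubgroup (EuclideanSpace ℝ (Fin L)) :=
  AddSubgroup.closure (Set.range fun i => EuclideanSpace.single i (1 : ℝ))

/-- `Λ'` is a geometrically similar sublattice of `Λ` of index `N`:
`Λ' = {c·O(v) : v ∈ Λ}` for some `c > 0` and orthogonal matrix `O`, with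
`[Λ : Λ'] = N`. -/
noncomputable def IsSimilarSublattice {L : ℕ}
    (Λ Λ' : AddSubgroup (EuclideanSpace ℝ (Fin L))) (N : ℕ) : Prop :=
  Λ' ≤ Λ ∧ (Λ'.addSubgroupOf Λ).index = N ∧
    ∃ (c : ℝ) (O : Matrix (Fin L) (Fin L) ℝ), 0 < c ∧ O * O.transpose = 1 ∧
      Λ' = AddSubgroup.map (c • Matrix.toEuclideanLin O).toAddMonoidHom Λ

section Helpers

lemma natAbs_prod' {ι : Type*} (s : Finset ι) (f : ι → ℤ) :
    (∏ i ∈ s, f i).natAbs = ∏ i ∈ s, (f i).natAbs :=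
  map_prod Int.natAbsHom f s

lemma index_range_eq_natAbs_det {L : ℕ} (g : (Fin L → ℤ) →ₗ[ℤ] (Fin L → ℤ))
    (hg : Function.Injective g) :
    (LinearMap.range g).toAddSubgroup.index = (LinearMap.det g).natAbs := by
  classical
  set N : Submodule ℤ (Fin L → ℤ) := LinearMap.range g with hN
  obtain ⟨n, snf⟩ := N.smithNormalForm (Pi.basisFun ℤ (Fin L))
  let e0 : (Fin L → ℤ) ≃ₗ[ℤ] N := LinearEquiv.ofInjective g hg
  have hn : n = L := by
    have h1 : Module.finrank ℤ N = L := by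
      rw [← LinearEquiv.finrank_eq e0]
      simp [Module.finrank_pi]
    have h2 : Module.finrank ℤ N = n := by
      rw [Module.finrank_eq_card_basis snf.bN]
      simp
    omega
  have hf : Function.Bijective snf.f := by
    rw [Fintype.bijective_iff_injective_and_card]
    exact ⟨snf.f.injective, by simp [hn]⟩
  let fe : Fin n ≃ Fin L := Equiv.ofBijective _ hf
  let e' : (Fin L → ℤ) ≃ₗ[ℤ] N := snf.bM.equiv snf.bN fe.symm
  have hdet : (LinearMap.det g).natAbs =
      (LinearMap.det ((N.subtype).comp (e' : (Fin L → ℤ) →ₗ[ℤ] N))).natAbs := by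
    have hcomp : (N.subtype).comp (e0 : (Fin L → ℤ) →ₗ[ℤ] N) = g :=
      LinearMap.ext fun v => rfl
    rw [← hcomp]
    exact Int.natAbs_eq_iff_associated.mpr (LinearMap.associated_det_comp_equiv _ _ _)
  have happly : ∀ j, ((N.subtype).comp (e' : (Fin L → ℤ) →ₗ[ℤ] N)) (snf.bM j) =
      snf.a (fe.symm j) • snf.bM j := by
    intro j
    have h1 : e' (snf.bM j) = snf.bN (fe.symm j) := snf.bM.equiv_apply j snf.bN fe.symm
    have h2 : (snf.bN (fe.symm j) : Fin L → ℤ) = snf.a (fe.symm j) • snf.bM (snf.f (fe.symm j)) :=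
      snf.snf (fe.symm j)
    have h3 : snf.f (fe.symm j) = j := fe.apply_symm_apply j
    show ((e' (snf.bM j) : Fin L → ℤ)) = _
    rw [h1, h2, h3]
  have hdet2 : (LinearMap.det ((N.subtype).comp (e' : (Fin L → ℤ) →ₗ[ℤ] N))).natAbs =
      ∏ i : Fin n, (snf.a i).natAbs := by
    rw [← LinearMap.det_toMatrix snf.bM]
    have hmat : LinearMap.toMatrix snf.bM snf.bM ((N.subtype).comp (e' : (Fin L → ℤ) →ₗ[ℤ] N))
        = Matrix.diagonal (fun j => snf.a (fe.symm j)) := by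
      ext i j
      rw [LinearMap.toMatrix_apply, happly, _root_.map_smul, Module.Basis.repr_self, Finsupp.smul_single,
        smul_eq_mul, mul_one]
      by_cases h : i = j
      · rw [h, Matrix.diagonal_apply_eq, Finsupp.single_eq_same]
      · rw [Matrix.diagonal_apply_ne _ h, Finsupp.single_eq_of_ne h]
    rw [hmat, Matrix.det_diagonal, natAbs_prod']
    exact (Fintype.prod_equiv fe (fun i => (snf.a i).natAbs)
      (fun j => (snf.a (fe.symm j)).natAbs) (fun x => by simp)).symm
  have hidx : N.toAddSubgroup.index = ∏ i : Fin n, (snf.a i).natAbs := by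
    rw [snf.toAddSubgroup_index_eq_pow_mul_prod]
    have hc0 : Fintype.card (Fin L) - n = 0 := by simp [hn]
    rw [hc0, pow_zero, one_mul]
    exact Finset.prod_congr rfl fun i _ => by
      rw [Ideal.span_singleton_toAddSubgroup_eq_zmultiples, Int.index_zmultiples]
  rw [hidx, hdet, hdet2]

/-- Coordinatewise integer cast as an additive hom into Euclidean space. -/
noncomputable def castHom (L : ℕ) : (Fin L → ℤ) →+ EuclideanSpace ℝ (Fin L) where
  toFun v := WithLp.toLp 2 (fun i => ((v i : ℝ)))
  map_zero' := by ext i; simp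
  map_add' x y := by
    ext i
    show ((x i + y i : ℤ) : ℝ) = (x i : ℝ) + (y i : ℝ)
    push_cast; ring

lemma castHom_apply {L : ℕ} (v : Fin L → ℤ) (i : Fin L) : castHom L v i = (v i : ℝ) := rfl

lemma castHom_injective (L : ℕ) : Function.Injective (castHom L) := by
  intro v w h
  funext i
  have := congrFun (congrArg WithLp.ofLp h) i
  rw [castHom_apply, castHom_apply] at this
  exact_mod_cast this

lemma castHom_single {L : ℕ} (j : Fin L) (x : ℤ) :
    castHom L (Pi.single j x) = x • EuclideanSpace.single j (1 : ℝ) := by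
  ext i
  rw [castHom_apply]
  show _ = x • (EuclideanSpace.single j (1:ℝ) i)
  rcases eq_or_ne i j with rfl | h
  · simp [EuclideanSpace.single_apply]
  · simp [Pi.single_eq_of_ne h, EuclideanSpace.single_apply, h]

lemma castHom_eq_sum {L : ℕ} (v : Fin L → ℤ) :
    castHom L v = ∑ i, v i • EuclideanSpace.single i (1 : ℝ) := by
  ext j
  rw [castHom_apply]
  have h1 : (∑ i, v i • EuclideanSpace.single i (1 : ℝ)) j
      = ∑ i, v i • (EuclideanSpace.single i (1:ℝ) j) := by
    rw [WithLp.ofLp_sum]; exact Finset.sum_apply j Finset.univ _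
  rw [h1]
  simp [EuclideanSpace.single_apply]

lemma Zlat_eq_range (L : ℕ) : Zlat L = (castHom L).range := by
  apply le_antisymm
  · rw [Zlat, AddSubgroup.closure_le]
    rintro _ ⟨i, rfl⟩
    exact AddMonoidHom.mem_range.mpr ⟨Pi.single i 1, by rw [castHom_single]; simp⟩
  · rintro _ ⟨v, rfl⟩
    rw [castHom_eq_sum]
    exact AddSubgroup.sum_mem _ fun i _ =>
      AddSubgroup.zsmul_mem _ (AddSubgroup.subset_closure (Set.mem_range_self i)) _

lemma index_addSubgroupOf_eq {L : ℕ} (Λ' : AddSubgroup (EuclideanSpace ℝ (Fin L))) :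
    (Λ'.addSubgroupOf (Zlat L)).index = (Λ'.comap (castHom L)).index := by
  let φ : (Fin L → ℤ) →+ (Zlat L) :=
    (castHom L).codRestrict (Zlat L) (fun v => by
      rw [Zlat_eq_range]; exact AddMonoidHom.mem_range.mpr ⟨v, rfl⟩)
  have hφ : Function.Surjective φ := by
    rintro ⟨x, hx⟩
    rw [Zlat_eq_range] at hx
    obtain ⟨v, rfl⟩ := hx
    exact ⟨v, rfl⟩
  have h1 := AddSubgroup.index_comap_of_surjective (Λ'.addSubgroupOf (Zlat L)) hφ
  have h2 : (Λ'.addSubgroupOf (Zlat L)).comap φ = Λ'.comap (castHom L) := by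
    ext v
    simp [AddSubgroup.mem_addSubgroupOf, φ, AddMonoidHom.codRestrict]
  rw [← h1, h2]

lemma similar_main {L : ℕ} (g : (Fin L → ℤ) →ₗ[ℤ] (Fin L → ℤ)) (hg : Function.Injective g) :
    AddSubgroup.map (castHom L) (LinearMap.range g).toAddSubgroup ≤ Zlat L ∧
    ((AddSubgroup.map (castHom L) (LinearMap.range g).toAddSubgroup).addSubgroupOf
      (Zlat L)).index = (LinearMap.det g).natAbs := by
  constructor
  · rw [Zlat_eq_range]
    rintro _ ⟨x, -, rfl⟩
    exact AddMonoidHom.mem_range.mpr ⟨x, rfl⟩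
  · rw [index_addSubgroupOf_eq,
      AddSubgroup.comap_map_eq_self_of_injective (castHom_injective L),
      index_range_eq_natAbs_det g hg]

lemma arith_lemma (N K t : ℕ) (hN : 0 < N) (h : N ^ 2 = K ^ (2 * t + 1)) :
    ∃ m : ℕ, 0 < m ∧ N = m ^ (2 * t + 1) ∧ K = m ^ 2 := by
  have hD : (K ^ t) ^ 2 ∣ N ^ 2 := by
    rw [h]; ring_nf; exact Dvd.intro_left _ (by ring)
  have hDN : K ^ t ∣ N := (Nat.pow_dvd_pow_iff two_ne_zero).mp hD
  obtain ⟨m, hm⟩ := hDN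
  have hK0 : K ≠ 0 := by
    rintro rfl
    rw [zero_pow (by omega)] at h
    exact hN.ne' (by nlinarith)
  have hKt : 0 < K ^ (2 * t) := pow_pos (Nat.pos_of_ne_zero hK0) _
  have hmK : m ^ 2 = K := by
    have h' : K ^ (2 * t) * m ^ 2 = K ^ (2 * t) * K := by
      have := h
      rw [hm, mul_pow, ← pow_mul, pow_succ, show t * 2 = 2 * t from by ring] at this
      exact this
    exact Nat.eq_of_mul_eq_mul_left hKt h'
  have hm0 : 0 < m := by
    rcases Nat.eq_zero_or_pos m with rfl | h0
    · rw [hm] at hN; omega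
    · exact h0
  refine ⟨m, hm0, ?_, hmK.symm⟩
  rw [hm, ← hmK]; ring

lemma toEuclideanLin_single {L : ℕ} (O : Matrix (Fin L) (Fin L) ℝ) (j : Fin L) (i : Fin L) :
    (Matrix.toEuclideanLin O) (EuclideanSpace.single j (1:ℝ)) i = O i j := by
  have h : (EuclideanSpace.single j (1:ℝ))
      = (WithLp.equiv 2 (Fin L → ℝ)).symm (Pi.single j 1) := rfl
  rw [h, WithLp.equiv_symm_apply, Matrix.toEuclideanLin_apply_piLp_toLp]
  show (O *ᵥ Pi.single j 1) i = O i j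
  rw [Matrix.mulVec_single]
  exact mul_one _

lemma toEuclideanLin_one {L : ℕ} :
    Matrix.toEuclideanLin (1 : Matrix (Fin L) (Fin L) ℝ) = LinearMap.id := by
  apply LinearMap.ext
  intro x
  have : (WithLp.equiv 2 (Fin L → ℝ)).symm
      ((1 : Matrix (Fin L) (Fin L) ℝ) *ᵥ (WithLp.equiv 2 _ x)) = x := by
    rw [Matrix.one_mulVec]; rfl
  exact this

/-- Part 2: `m ℤ^L` is a similar sublattice of index `m^L`. -/
lemma part2 {L : ℕ} (m : ℕ) (hm : 0 < m) :
    IsSimilarSublattice (Zlat L)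
      (AddSubgroup.map
        ((m : ℝ) • (LinearMap.id : EuclideanSpace ℝ (Fin L) →ₗ[ℝ] EuclideanSpace ℝ (Fin L))).toAddMonoidHom
        (Zlat L))
      (m ^ L) := by
  set F : EuclideanSpace ℝ (Fin L) →ₗ[ℝ] EuclideanSpace ℝ (Fin L) := (m : ℝ) • LinearMap.id
    with hF
  set g : (Fin L → ℤ) →ₗ[ℤ] (Fin L → ℤ) := Matrix.toLin' ((m:ℤ) • (1 : Matrix (Fin L) (Fin L) ℤ))
    with hg
  have hgv : ∀ v, g v = fun i => (m:ℤ) * v i := by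
    intro v; funext i
    rw [hg, Matrix.toLin'_apply, Matrix.smul_mulVec, Matrix.one_mulVec]
    simp
  have hcomm : ∀ v, castHom L (g v) = F (castHom L v) := by
    intro v; ext i
    rw [hgv]
    show ((m * v i : ℤ) : ℝ) = (m : ℝ) * ((v i : ℝ))
    push_cast; ring
  have hginj : Function.Injective g := by
    intro u v h
    rw [hgv u, hgv v] at h
    funext i
    have h2 := congrFun h i
    exact mul_left_cancel₀ (by exact_mod_cast hm.ne') h2
  obtain ⟨hle2, hidx2⟩ := similar_main g hginj
  have hΛeq : AddSubgroup.map F.toAddMonoidHom (Zlat L)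
      = AddSubgroup.map (castHom L) (LinearMap.range g).toAddSubgroup := by
    ext z
    simp only [AddSubgroup.mem_map, Submodule.mem_toAddSubgroup, LinearMap.mem_range]
    constructor
    · rintro ⟨y, hy, rfl⟩
      rw [Zlat_eq_range] at hy
      obtain ⟨v, rfl⟩ := hy
      exact ⟨g v, ⟨v, rfl⟩, (hcomm v)⟩
    · rintro ⟨y, ⟨v, rfl⟩, rfl⟩
      refine ⟨castHom L v, ?_, (hcomm v).symm⟩
      rw [Zlat_eq_range]
      exact AddMonoidHom.mem_range.mpr ⟨v, rfl⟩
  unfold IsSimilarSublattice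
  refine ⟨?_, ?_, (m : ℝ), 1, by exact_mod_cast hm, by simp, ?_⟩
  · rw [hΛeq]; exact hle2
  · rw [hΛeq, hidx2, hg, LinearMap.det_toLin', Matrix.det_smul, Matrix.det_one, mul_one,
      Fintype.card_fin]
    rw [Int.natAbs_pow]
    simp
  · rw [show ((m:ℝ) • Matrix.toEuclideanLin (1 : Matrix (Fin L) (Fin L) ℝ)) = F by
      rw [toEuclideanLin_one]]

end Helpers

theorem stmt9 {L : ℕ} (hL : Odd L) (N : ℕ) (hN : 0 < N) :
    ((∃ Λ' : AddSubgroup (EuclideanSpace ℝ (Fin L)), IsSimilarSublattice (Zlat L) Λ' N) ↔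
      ∃ m : ℕ, 0 < m ∧ N = m ^ L) ∧
    ∀ m : ℕ, 0 < m →
      IsSimilarSublattice (Zlat L)
        (AddSubgroup.map
          ((m : ℝ) • (LinearMap.id : EuclideanSpace ℝ (Fin L) →ₗ[ℝ] EuclideanSpace ℝ (Fin L))).toAddMonoidHom
          (Zlat L))
        (m ^ L) := by
  obtain ⟨t, ht⟩ := hL
  have hL1 : 0 < L := by omega
  constructor
  · constructor
    · rintro ⟨Λ', h⟩
      unfold IsSimilarSublattice at h
      obtain ⟨hle, hidx, c, O, hc, hO, hmap⟩ := h
      -- setup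
      set F : EuclideanSpace ℝ (Fin L) →ₗ[ℝ] EuclideanSpace ℝ (Fin L) :=
        c • Matrix.toEuclideanLin O with hF
      have hsingle : ∀ j, EuclideanSpace.single j (1:ℝ) ∈ Zlat L := fun j =>
        AddSubgroup.subset_closure (Set.mem_range_self j)
      have hFmem : ∀ j, F (EuclideanSpace.single j 1) ∈ (castHom L).range := by
        intro j
        rw [← Zlat_eq_range]
        exact hle (hmap ▸ AddSubgroup.mem_map_of_mem _ (hsingle j))
      choose w hw using fun j => AddMonoidHom.mem_range.mp (hFmem j)
      set M : Matrix (Fin L) (Fin L) ℤ := Matrix.of fun i j => w j i with hM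
      have hMc : ∀ i j, ((M i j : ℤ) : ℝ) = c * O i j := by
        intro i j
        have h1 := congrFun (congrArg WithLp.ofLp (hw j)) i
        rw [castHom_apply] at h1
        show ((w j i : ℤ) : ℝ) = _
        rw [h1]
        show c * ((Matrix.toEuclideanLin O) (EuclideanSpace.single j 1) i) = _
        rw [toEuclideanLin_single]
      have hcomm : ∀ v, castHom L (Matrix.toLin' M v) = F (castHom L v) := by
        intro v; ext i
        rw [castHom_apply]
        have h2 : (Matrix.toLin' M v) i = ∑ j, M i j * v j := by
          rw [Matrix.toLin'_apply]
          rfl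
        rw [h2]
        push_cast
        show _ = c * ∑ j, O i j * ((v j : ℝ))
        rw [Finset.mul_sum]
        exact Finset.sum_congr rfl fun j _ => by rw [hMc i j]; ring
      have hObij : Function.Injective (fun (x : Fin L → ℝ) => O *ᵥ x) := by
        have hO' : O.transpose * O = 1 := mul_eq_one_comm.mp hO
        intro x y hxy
        have h3 : O.transpose *ᵥ (O *ᵥ x) = O.transpose *ᵥ (O *ᵥ y) := by
          simp only at hxy
          rw [hxy]
        rwa [Matrix.mulVec_mulVec, Matrix.mulVec_mulVec, hO', Matrix.one_mulVec,
          Matrix.one_mulVec] at h3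
      have hFinj : Function.Injective F := by
        intro x y hxy
        have h2 : Matrix.toEuclideanLin O x = Matrix.toEuclideanLin O y :=
          smul_right_injective _ (ne_of_gt hc) hxy
        have h3 := congrArg (WithLp.equiv 2 (Fin L → ℝ)) h2
        rw [WithLp.equiv_apply, WithLp.equiv_apply, Matrix.piLp_ofLp_toEuclideanLin, Matrix.piLp_ofLp_toEuclideanLin,
          Matrix.toLin'_apply, Matrix.toLin'_apply] at h3
        exact (WithLp.equiv 2 (Fin L → ℝ)).injective (hObij h3)
      have hginj : Function.Injective (Matrix.toLin' M) := by
        intro u v h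
        apply castHom_injective L
        apply hFinj
        rw [← hcomm, ← hcomm, h]
      have hΛ'eq : Λ' = AddSubgroup.map (castHom L) (LinearMap.range (Matrix.toLin' M)).toAddSubgroup := by
        rw [hmap]
        ext z
        simp only [AddSubgroup.mem_map, Submodule.mem_toAddSubgroup, LinearMap.mem_range]
        constructor
        · rintro ⟨y, hy, rfl⟩
          rw [Zlat_eq_range] at hy
          obtain ⟨v, rfl⟩ := hy
          exact ⟨Matrix.toLin' M v, ⟨v, rfl⟩, hcomm v⟩
        · rintro ⟨y, ⟨v, rfl⟩, rfl⟩
          refine ⟨castHom L v, ?_, (hcomm v).symm⟩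
          rw [Zlat_eq_range]
          exact AddMonoidHom.mem_range.mpr ⟨v, rfl⟩
      obtain ⟨hle2, hidx2⟩ := similar_main (Matrix.toLin' M) hginj
      have hNdet : N = (M.det).natAbs := by
        rw [← hidx, hΛ'eq, hidx2, LinearMap.det_toLin']
      -- the integer c²
      set i0 : Fin L := ⟨0, hL1⟩
      set K : ℤ := ∑ k, M i0 k * M i0 k with hK
      have hOrow : ∀ i j, (O * O.transpose) i j = ∑ k, O i k * O j k := by
        intro i j
        rw [Matrix.mul_apply]
        exact Finset.sum_congr rfl fun k _ => by rw [Matrix.transpose_apply]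
      have hKc : ((K : ℤ) : ℝ) = c^2 := by
        rw [hK]
        push_cast
        have h5 : ∀ k, ((M i0 k : ℝ)) * ((M i0 k : ℝ)) = c^2 * (O i0 k * O i0 k) := by
          intro k; rw [hMc]; ring
        rw [Finset.sum_congr rfl fun k _ => h5 k, ← Finset.mul_sum, ← hOrow, hO]
        simp [Matrix.one_apply]
      have hKnn : (0:ℤ) ≤ K := by
        rw [hK]
        exact Finset.sum_nonneg fun k _ => mul_self_nonneg _
      have hMMT : M * M.transpose = K • (1 : Matrix (Fin L) (Fin L) ℤ) := by
        ext i j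
        apply (Int.cast_injective (α := ℝ))
        have lhs : (((M * M.transpose) i j : ℤ) : ℝ)
            = c^2 * ((1 : Matrix (Fin L) (Fin L) ℝ) i j) := by
          rw [Matrix.mul_apply]
          push_cast
          have h5 : ∀ k, ((M i k : ℝ)) * ((M j k : ℝ)) = c^2 * (O i k * O j k) := by
            intro k
            rw [hMc, hMc]
            ring
          simp only [Matrix.transpose_apply]
          rw [Finset.sum_congr rfl fun k _ => h5 k, ← Finset.mul_sum, ← hOrow i j, hO]
        have rhs : (((K • (1 : Matrix (Fin L) (Fin L) ℤ)) i j : ℤ) : ℝ)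
            = c^2 * ((1 : Matrix (Fin L) (Fin L) ℝ) i j) := by
          rw [Matrix.smul_apply, smul_eq_mul]
          rcases eq_or_ne i j with rfl | hij
          · rw [Matrix.one_apply_eq, Matrix.one_apply_eq, mul_one, mul_one]
            exact_mod_cast hKc
          · rw [Matrix.one_apply_ne hij, Matrix.one_apply_ne hij, mul_zero, mul_zero]
            push_cast
            ring
        rw [lhs, rhs]
      have hdet2 : M.det * M.det = K ^ L := by
        have h6 := congrArg Matrix.det hMMT
        rwa [Matrix.det_mul, Matrix.det_transpose, Matrix.det_smul, Matrix.det_one, mul_one,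
          Fintype.card_fin] at h6
      have h7 : (N:ℤ)^2 = ((K.toNat : ℕ) : ℤ)^L := by
        rw [hNdet, Int.toNat_of_nonneg hKnn, ← hdet2, pow_two]
        exact Int.natAbs_mul_self' M.det
      have h8 : N^2 = K.toNat ^ L := by exact_mod_cast h7
      rw [ht] at h8
      obtain ⟨m, hm0, hNm, -⟩ := arith_lemma N K.toNat t hN h8
      exact ⟨m, hm0, by rw [hNm, ← ht]⟩
    · rintro ⟨m, hm0, rfl⟩
      exact ⟨_, part2 m hm0⟩
  · exact fun m hm => part2 m hm
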